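/- Let p be a positive integer, c : ZMod p ≃ ZMod p a bijection (a cycle of maximal length), and J_c = Σ_i E_{c(i), c(i+1)} its passage matrix. Let Φ be a linear map on the p×p complex matrices and β : ZMod p → ℝ a family of nonnegative coefficients such that Φ(E_{c(j), c(j+l)}) = Σ_{k ∈ ZMod p} β(k) E_{c(j+k), c(j+k+l)} for all j, l ∈ ZMod p. Then Φ(x) = Σ_{k ∈ ZMod p} β(-k) · J_c^k x (J_c^k)* for every p×p complex matrix x; that is, every circulant completely positive map equals the map Φ_c associated with the cycle c. -/

import Mathlib

open Matrix

noncomputable section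

/-- The passage matrix of the maximal-length cycle determined by a bijection `c`. -/
def passageMatrix (p : ℕ) [NeZero p] (c : ZMod p ≃ ZMod p) : Matrix (ZMod p) (ZMod p) ℂ :=
  ∑ i : ZMod p, Matrix.single (c i) (c (i + 1)) (1 : ℂ)

lemma one_eq_sum_aux (p : ℕ) [NeZero p] (c : ZMod p ≃ ZMod p) :
    (1 : Matrix (ZMod p) (ZMod p) ℂ) = ∑ i : ZMod p, single (c i) (c i) (1 : ℂ) := by
  rw [Equiv.sum_comp c (fun j => single j j (1 : ℂ))]
  ext a b
  simp only [Matrix.sum_apply, single, Matrix.one_apply, of_apply]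
  rcases eq_or_ne a b with h | h
  · subst h; simp
  · simp [h, Finset.sum_ite_eq, fun x => (show ¬(x = a ∧ x = b) from fun ⟨h1, h2⟩ => h (h1 ▸ h2 ▸ rfl))]

lemma passageMatrix_pow_aux (p : ℕ) [NeZero p] (c : ZMod p ≃ ZMod p) (n : ℕ) :
    passageMatrix p c ^ n = ∑ i : ZMod p, single (c i) (c (i + n)) (1 : ℂ) := by
  induction n with
  | zero => simpa using one_eq_sum_aux p c
  | succ n ih =>
    rw [pow_succ, ih, passageMatrix, Finset.sum_mul_sum]
    rw [Finset.sum_congr rfl (fun i _ => Finset.sum_eq_single (i + (n : ZMod p))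
      (fun j _ hj => Matrix.single_mul_single_of_ne _ _ _ _ (fun h => hj (c.injective h).symm) _)
      (by simp))]
    simp [Matrix.single_mul_single_same, add_assoc, Nat.cast_succ]

lemma stdBasis_conjT_aux (p : ℕ) [NeZero p] (a b : ZMod p) :
    (single a b (1 : ℂ))ᴴ = single b a (1 : ℂ) := by
  ext i j
  simp [conjTranspose_apply, single, and_comm]

lemma key_aux (p : ℕ) [NeZero p] (c : ZMod p ≃ ZMod p) (j l k : ZMod p) :
    passageMatrix p c ^ k.val * single (c j) (c (j + l)) (1 : ℂ) *
      (passageMatrix p c ^ k.val)ᴴ = single (c (j - k)) (c (j + l - k)) (1 : ℂ) := by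
  have hk : ((k.val : ℕ) : ZMod p) = k := by rw [ZMod.natCast_val, ZMod.cast_id]
  rw [passageMatrix_pow_aux, hk, Matrix.conjTranspose_sum]
  simp only [stdBasis_conjT_aux]
  rw [Finset.sum_mul]
  rw [Finset.sum_eq_single (j - k)
    (fun i _ hi => Matrix.single_mul_single_of_ne _ _ _ _
        (fun h => hi (eq_sub_of_add_eq (c.injective h))) _)
    (by simp)]
  rw [sub_add_cancel, Matrix.single_mul_single_same, Finset.mul_sum]
  rw [Finset.sum_eq_single (j + l - k)
    (fun i _ hi => Matrix.single_mul_single_of_ne _ _ _ _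
        (fun h => hi (eq_sub_of_add_eq (c.injective h).symm)) _)
    (by simp)]
  rw [sub_add_cancel, Matrix.single_mul_single_same, one_mul, one_mul]

theorem stmt7 (p : ℕ) [NeZero p] (c : ZMod p ≃ ZMod p)
    (Φ : Matrix (ZMod p) (ZMod p) ℂ →ₗ[ℂ] Matrix (ZMod p) (ZMod p) ℂ)
    (β : ZMod p → ℝ) (hβ : ∀ k, 0 ≤ β k)
    (hΦ : ∀ j l : ZMod p,
      Φ (Matrix.single (c j) (c (j + l)) (1 : ℂ)) =
        ∑ k : ZMod p, (β k : ℂ) •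
          Matrix.single (c (j + k)) (c (j + k + l)) (1 : ℂ)) :
    ∀ x : Matrix (ZMod p) (ZMod p) ℂ,
      Φ x = ∑ k : ZMod p, (β (-k) : ℂ) •
        (passageMatrix p c ^ k.val * x * (passageMatrix p c ^ k.val)ᴴ) := by
  have main : ∀ (a b : ZMod p) (v : ℂ),
      Φ (single a b v) = ∑ k : ZMod p, (β (-k) : ℂ) •
        (passageMatrix p c ^ k.val * single a b v * (passageMatrix p c ^ k.val)ᴴ) := by
    intro a b v
    set j := c.symm a with hj
    set l := c.symm b - c.symm a with hl
    have ha : a = c j := (c.apply_symm_apply a).symm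
    have hb : b = c (j + l) := by
      rw [hj, hl, add_sub_cancel, c.apply_symm_apply]
    have hv : single a b v = v • single a b (1 : ℂ) := by
      rw [smul_single, smul_eq_mul, mul_one]
    rw [hv, _root_.map_smul]
    rw [ha, hb, hΦ j l, Finset.smul_sum]
    simp only [Matrix.mul_smul, Matrix.smul_mul, key_aux p c j l, smul_smul]
    apply Fintype.sum_equiv (Equiv.neg (ZMod p))
    intro x
    simp only [Equiv.neg_apply, neg_neg, sub_neg_eq_add]
    rw [mul_comm]
    congr 2
    ring
  intro x
  have expand := matrix_eq_sum_single x
  conv_rhs => rw [expand]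
  simp only [Finset.mul_sum, Finset.sum_mul, Finset.smul_sum]
  rw [Finset.sum_comm]
  conv_lhs => rw [expand]
  rw [map_sum]
  refine Finset.sum_congr rfl fun a _ => ?_
  rw [map_sum]
  simp only [main]
  exact Finset.sum_comm
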